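/- Fix an integer N ≥ 1 and set c_j = −j(2N+2−j)/(N+1−j)² for j = 1, …, N, ρ = 2 − 1/(N+1), and η(ζ) = ((ρ−1)ζ − (ρ−2))/(ρζ − (ρ−1)). Fix λ ∈ ℂ, λ ≠ 0, and define z(s) = −λ·s·∏_{j=1}^N (1 + (c_j − 1)s), w(s) = λ²·s·(s−1)·∏_{j=1}^N (1 + (c_j − 1)s)². For τ ∈ ℂ set z₀ = ((τ+1)/τ)·z(τ²), ζ = τ/(τ+1), ζ* = η(ζ), z* = z₀·ζ*, w* = 2·z*·z₀ − z₀². Then, for every τ with τ ≠ 0, τ ≠ −1 and ρζ − (ρ−1) ≠ 0, one has z* = z((τ + 1/(N+1))²) and w* = w((τ + 1/(N+1))²). (Thus in the coordinate τ the dual billiard map of type a2 acts on each invariant curve as the translation τ ↦ τ + 1/(N+1).) -/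

import Mathlib

private lemma aux_tele (f : ℕ → ℂ) (n : ℕ) :
    (∏ j ∈ Finset.range n, f (j+1)) * f 0 = (∏ j ∈ Finset.range n, f j) * f n := by
  rw [← Finset.prod_range_succ', Finset.prod_range_succ]

private lemma aux_reflect (N : ℕ) (f : ℂ → ℂ) :
    (∏ j ∈ Finset.range N, f ((N:ℂ) - (j:ℂ))) = ∏ j ∈ Finset.range N, f ((j:ℂ) + 1) := by
  rw [← Finset.prod_range_reflect (fun j => f ((j:ℂ) + 1)) N]
  refine Finset.prod_congr rfl fun j hj => ?_
  rw [Finset.mem_range] at hj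
  congr 1
  have h1 : (N - 1 - j : ℕ) = N - (j+1) := by omega
  rw [h1, Nat.cast_sub (by omega)]
  push_cast; ring

theorem stmt_5 (N : ℕ) (hN : 1 ≤ N)
    (c : Fin N → ℂ)
    (hc : ∀ j : Fin N, c j =
      -((((j : ℕ) : ℂ) + 1) * (2 * (N : ℂ) + 2 - (((j : ℕ) : ℂ) + 1))) /
        ((N : ℂ) + 1 - (((j : ℕ) : ℂ) + 1)) ^ 2)
    (ρ : ℂ) (hρ : ρ = 2 - 1 / ((N : ℂ) + 1))
    (η : ℂ → ℂ) (hη : ∀ ζ : ℂ, η ζ = ((ρ - 1) * ζ - (ρ - 2)) / (ρ * ζ - (ρ - 1)))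
    (lam : ℂ) (hlam : lam ≠ 0)
    (z w : ℂ → ℂ)
    (hz : ∀ s : ℂ, z s = -lam * s * ∏ j, (1 + (c j - 1) * s))
    (hw : ∀ s : ℂ, w s = lam ^ 2 * s * (s - 1) * ∏ j, (1 + (c j - 1) * s) ^ 2)
    (τ : ℂ) (hτ0 : τ ≠ 0) (hτ1 : τ ≠ -1)
    (z₀ ζ ζs zs ws : ℂ)
    (hz₀ : z₀ = ((τ + 1) / τ) * z (τ ^ 2))
    (hζ : ζ = τ / (τ + 1))
    (hden : ρ * ζ - (ρ - 1) ≠ 0)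
    (hζs : ζs = η ζ)
    (hzs : zs = z₀ * ζs)
    (hws : ws = 2 * zs * z₀ - z₀ ^ 2) :
    zs = z ((τ + 1 / ((N : ℂ) + 1)) ^ 2) ∧ ws = w ((τ + 1 / ((N : ℂ) + 1)) ^ 2) := by
  have hM : ((N:ℂ) + 1) ≠ 0 := by
    have : ((N+1 : ℕ) : ℂ) ≠ 0 := Nat.cast_ne_zero.mpr (Nat.succ_ne_zero N)
    push_cast at this; exact this
  have hτ1' : τ + 1 ≠ 0 := by
    intro h; exact hτ1 (by linear_combination h)
  -- v ≠ 0
  have hrel : ρ * ζ - (ρ - 1) = (((N:ℂ)+1)*τ + 1 - ((N:ℂ)+1)) / (((N:ℂ)+1)*(τ+1)) := by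
    rw [hρ, hζ]; field_simp; ring
  have hv : ((N:ℂ)+1)*τ + 1 - ((N:ℂ)+1) ≠ 0 := by
    intro h; apply hden; rw [hrel, h, zero_div]
  have hζsf : ζs = (((N:ℂ)+1)*τ + 1) / (((N:ℂ)+1)*τ + 1 - ((N:ℂ)+1)) := by
    rw [hζs, hη, div_eq_div_iff hden hv, hρ, hζ]
    field_simp
    ring
  -- nonzero factors
  have hd : ∀ j : Fin N, ((N:ℂ) - ((j:ℕ):ℂ)) ≠ 0 := by
    intro j
    have h2 : (j:ℕ) < N := j.2
    have h3 : ((N - (j:ℕ) : ℕ) : ℂ) = (N:ℂ) - ((j:ℕ):ℂ) := Nat.cast_sub (le_of_lt h2)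
    rw [← h3]
    exact Nat.cast_ne_zero.mpr (Nat.sub_ne_zero_of_lt h2)
  -- factor lemma
  have hfac : ∀ (s : ℂ) (j : Fin N),
      ((N:ℂ) - ((j:ℕ):ℂ))^2 * (1 + (c j - 1) * s)
        = ((N:ℂ) - ((j:ℕ):ℂ))^2 - ((N:ℂ)+1)^2 * s := by
    intro s j
    have h1 : ((N:ℂ) + 1 - (((j:ℕ):ℂ) + 1)) ≠ 0 := by
      intro h; exact hd j (by linear_combination h)
    have e : c j * ((N:ℂ) + 1 - (((j:ℕ):ℂ) + 1))^2
        = -((((j:ℕ):ℂ) + 1) * (2*(N:ℂ) + 2 - (((j:ℕ):ℂ) + 1))) := by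
      rw [hc j]; exact div_mul_cancel₀ _ (pow_ne_zero 2 h1)
    linear_combination s * e
  set D2 : ℂ := ∏ j : Fin N, ((N:ℂ) - ((j:ℕ):ℂ))^2 with hD2def
  have hD2 : D2 ≠ 0 := by
    rw [hD2def]
    exact Finset.prod_ne_zero_iff.mpr fun j _ => pow_ne_zero 2 (hd j)
  set A : ℂ := ∏ j : Fin N, ((N:ℂ) - ((j:ℕ):ℂ) - ((N:ℂ)+1)*τ) with hAdef
  set B : ℂ := ∏ j : Fin N, ((N:ℂ) - ((j:ℕ):ℂ) + ((N:ℂ)+1)*τ) with hBdef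
  set A' : ℂ := ∏ j : Fin N, ((N:ℂ) - ((j:ℕ):ℂ) - (((N:ℂ)+1)*τ + 1)) with hA'def
  set B' : ℂ := ∏ j : Fin N, ((N:ℂ) - ((j:ℕ):ℂ) + (((N:ℂ)+1)*τ + 1)) with hB'def
  set Qτ : ℂ := ∏ j : Fin N, (1 + (c j - 1) * τ^2) with hQτdef
  set Qτ' : ℂ := ∏ j : Fin N, (1 + (c j - 1) * (τ + 1/((N:ℂ)+1))^2) with hQτ'def
  have hs2 : ((N:ℂ)+1)^2 * (τ + 1/((N:ℂ)+1))^2 = (((N:ℂ)+1)*τ + 1)^2 := by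
    field_simp
  have hQ : D2 * Qτ = A * B := by
    rw [hD2def, hQτdef, hAdef, hBdef, ← Finset.prod_mul_distrib, ← Finset.prod_mul_distrib]
    refine Finset.prod_congr rfl fun j _ => ?_
    linear_combination hfac (τ^2) j
  have hQ' : D2 * Qτ' = A' * B' := by
    rw [hD2def, hQτ'def, hA'def, hB'def, ← Finset.prod_mul_distrib, ← Finset.prod_mul_distrib]
    refine Finset.prod_congr rfl fun j _ => ?_
    linear_combination hfac ((τ + 1/((N:ℂ)+1))^2) j - hs2
  -- range forms
  have hAr : A = ∏ j ∈ Finset.range N, (((j:ℕ):ℂ) + 1 - ((N:ℂ)+1)*τ) := by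
    rw [hAdef, Fin.prod_univ_eq_prod_range (fun m => (N:ℂ) - ((m:ℕ):ℂ) - ((N:ℂ)+1)*τ) N,
        aux_reflect N (fun x => x - ((N:ℂ)+1)*τ)]
  have hA'r : A' = ∏ j ∈ Finset.range N, (((j:ℕ):ℂ) - ((N:ℂ)+1)*τ) := by
    rw [hA'def, Fin.prod_univ_eq_prod_range
        (fun m => (N:ℂ) - ((m:ℕ):ℂ) - (((N:ℂ)+1)*τ + 1)) N,
        aux_reflect N (fun x => x - (((N:ℂ)+1)*τ + 1))]
    exact Finset.prod_congr rfl fun j _ => by ring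
  have hBr : B = ∏ j ∈ Finset.range N, (((j:ℕ):ℂ) + 1 + ((N:ℂ)+1)*τ) := by
    rw [hBdef, Fin.prod_univ_eq_prod_range (fun m => (N:ℂ) - ((m:ℕ):ℂ) + ((N:ℂ)+1)*τ) N,
        aux_reflect N (fun x => x + ((N:ℂ)+1)*τ)]
  have hB'r : B' = ∏ j ∈ Finset.range N, (((j:ℕ):ℂ) + 1 + 1 + ((N:ℂ)+1)*τ) := by
    rw [hB'def, Fin.prod_univ_eq_prod_range
        (fun m => (N:ℂ) - ((m:ℕ):ℂ) + (((N:ℂ)+1)*τ + 1)) N,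
        aux_reflect N (fun x => x + (((N:ℂ)+1)*τ + 1))]
    exact Finset.prod_congr rfl fun j _ => by ring
  -- telescoping
  have tA := aux_tele (fun m => ((m:ℕ):ℂ) - ((N:ℂ)+1)*τ) N
  push_cast at tA
  have tB := aux_tele (fun m => ((m:ℕ):ℂ) + 1 + ((N:ℂ)+1)*τ) N
  push_cast at tB
  have hAu : A * (((N:ℂ)+1)*τ) = A' * (((N:ℂ)+1)*τ + 1 - ((N:ℂ)+1)) := by
    rw [hAr, hA'r]; linear_combination -tA
  have hBu : B' * (1 + ((N:ℂ)+1)*τ) = B * ((N:ℂ) + 1 + ((N:ℂ)+1)*τ) := by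
    rw [hBr, hB'r]; linear_combination tB
  have hK : (((N:ℂ)+1)*τ) * (((N:ℂ)+1)*τ + ((N:ℂ)+1)) * (A*B)
      = (((N:ℂ)+1)*τ + 1) * (((N:ℂ)+1)*τ + 1 - ((N:ℂ)+1)) * (A'*B') := by
    linear_combination (B * ((N:ℂ)+1+((N:ℂ)+1)*τ)) * hAu
      - (A' * (((N:ℂ)+1)*τ + 1 - ((N:ℂ)+1))) * hBu
  -- z formulas times D2
  have hzt : z (τ^2) * D2 = -lam * τ^2 * (A*B) := by
    rw [hz, ← hQτdef]
    linear_combination (-lam * τ^2) * hQ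
  have hzt' : z ((τ + 1/((N:ℂ)+1))^2) * D2
      = -lam * (τ + 1/((N:ℂ)+1))^2 * (A'*B') := by
    rw [hz, ← hQτ'def]
    linear_combination (-lam * (τ + 1/((N:ℂ)+1))^2) * hQ'
  have hz₀D : z₀ * D2 = -lam * τ * (τ+1) * (A*B) := by
    rw [hz₀]
    have h4 : (τ+1)/τ * z (τ^2) * D2 = (τ+1)/τ * (z (τ^2) * D2) := by ring
    rw [h4, hzt, div_mul_eq_mul_div, div_eq_iff hτ0]
    ring
  have hzsv : zs * (((N:ℂ)+1)*τ + 1 - ((N:ℂ)+1)) = z₀ * (((N:ℂ)+1)*τ + 1) := by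
    rw [hzs, hζsf, mul_assoc, div_mul_cancel₀ _ hv]
  have key : -lam * τ * (τ+1) * (A*B) * (((N:ℂ)+1)*τ + 1)
      = -lam * (τ + 1/((N:ℂ)+1))^2 * (A'*B') * (((N:ℂ)+1)*τ + 1 - ((N:ℂ)+1)) := by
    apply mul_left_cancel₀ (pow_ne_zero 2 hM)
    linear_combination (lam * (A'*B') * (((N:ℂ)+1)*τ + 1 - ((N:ℂ)+1))) * hs2
      - lam * (((N:ℂ)+1)*τ + 1) * hK
  have goal1 : zs = z ((τ + 1/((N:ℂ)+1))^2) := by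
    apply mul_right_cancel₀ (mul_ne_zero hv hD2)
    calc zs * ((((N:ℂ)+1)*τ + 1 - ((N:ℂ)+1)) * D2)
        = zs * (((N:ℂ)+1)*τ + 1 - ((N:ℂ)+1)) * D2 := by ring
      _ = z₀ * (((N:ℂ)+1)*τ + 1) * D2 := by rw [hzsv]
      _ = (z₀ * D2) * (((N:ℂ)+1)*τ + 1) := by ring
      _ = -lam * τ * (τ+1) * (A*B) * (((N:ℂ)+1)*τ + 1) := by rw [hz₀D]
      _ = -lam * (τ + 1/((N:ℂ)+1))^2 * (A'*B')
            * (((N:ℂ)+1)*τ + 1 - ((N:ℂ)+1)) := key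
      _ = (z ((τ + 1/((N:ℂ)+1))^2) * D2) * (((N:ℂ)+1)*τ + 1 - ((N:ℂ)+1)) := by rw [hzt']
      _ = z ((τ + 1/((N:ℂ)+1))^2) * ((((N:ℂ)+1)*τ + 1 - ((N:ℂ)+1)) * D2) := by ring
  -- w part
  have hw'D : w ((τ + 1/((N:ℂ)+1))^2) * D2^2
      = lam^2 * (τ + 1/((N:ℂ)+1))^2 * ((τ + 1/((N:ℂ)+1))^2 - 1) * (A'*B')^2 := by
    rw [hw, Finset.prod_pow, ← hQτ'def]
    linear_combination (lam^2 * (τ + 1/((N:ℂ)+1))^2 * ((τ + 1/((N:ℂ)+1))^2 - 1)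
      * (D2*Qτ' + A'*B')) * hQ'
  have hzsD : zs * D2 = -lam * (τ + 1/((N:ℂ)+1))^2 * (A'*B') := by
    rw [goal1]; exact hzt'
  have E1 : ws * D2^2
      = 2 * (-lam * (τ + 1/((N:ℂ)+1))^2 * (A'*B')) * (-lam * τ*(τ+1)*(A*B))
        - (-lam * τ*(τ+1)*(A*B))^2 := by
    rw [hws]
    linear_combination (2*(z₀*D2)) * hzsD
      + (2*(-lam * (τ + 1/((N:ℂ)+1))^2 * (A'*B')) - z₀*D2 - (-lam*τ*(τ+1)*(A*B))) * hz₀D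
  have E2 : 2 * (-lam * (τ + 1/((N:ℂ)+1))^2 * (A'*B')) * (-lam * τ*(τ+1)*(A*B))
        - (-lam * τ*(τ+1)*(A*B))^2
      = lam^2 * (τ + 1/((N:ℂ)+1))^2 * ((τ + 1/((N:ℂ)+1))^2 - 1) * (A'*B')^2 := by
    apply mul_left_cancel₀ (pow_ne_zero 4 hM)
    linear_combination
      (2*lam^2*(A'*B')*(((N:ℂ)+1)^2*(τ*(τ+1))*(A*B))
        - lam^2*(A'*B')^2*(((N:ℂ)+1)^2*(τ + 1/((N:ℂ)+1))^2 + (((N:ℂ)+1)*τ+1)^2)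
        + lam^2*((N:ℂ)+1)^2*(A'*B')^2) * hs2
      + (2*lam^2*(A'*B')*((((N:ℂ)+1)*τ+1)^2)
        - lam^2*(((N:ℂ)+1)^2*(τ*(τ+1))*(A*B)
            + (((N:ℂ)+1)*τ+1)*((((N:ℂ)+1)*τ+1) - ((N:ℂ)+1))*(A'*B'))) * hK
  have goal2 : ws = w ((τ + 1/((N:ℂ)+1))^2) := by
    apply mul_right_cancel₀ (pow_ne_zero 2 hD2)
    rw [E1, E2, hw'D]
  exact ⟨goal1, goal2⟩
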